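/- Let q be a prime power, ℓ a positive integer, and F_{q^{2ℓ}} the finite field with q^{2ℓ} elements containing F_q as a subfield. Then the number of elements ζ of the cyclic subgroup of order q^ℓ + 1 of the multiplicative group F_{q^{2ℓ}}^* (i.e., elements with ζ^{q^ℓ+1} = 1) that have exactly 2ℓ Galois conjugates over F_q is greater than (1 − 3/q^{ℓ/2})·(q^ℓ + 1). -/

import Mathlib

open Polynomial Finset IntermediateField

private lemma geo_sum_le_aux (q m : ℕ) (hq : 2 ≤ q) :
    (∑ j ∈ Finset.Icc 1 m, q ^ j) + 2 ≤ 2 * q ^ m := by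
  induction m with
  | zero => simp
  | succ m ih =>
    rw [Finset.sum_Icc_succ_top (by omega)]
    have h2 : 2 * q ^ m ≤ q ^ (m + 1) := by
      rw [pow_succ]
      calc 2 * q ^ m = q ^ m * 2 := by ring
        _ ≤ q ^ m * q := Nat.mul_le_mul_left _ hq
    omega

private lemma exists_prime_div_aux (d n : ℕ) (hd : d ∣ n) (hlt : d < n) :
    ∃ p, p.Prime ∧ p ∣ n ∧ d ∣ n / p := by
  obtain ⟨k, hk⟩ := hd
  have hk1 : k ≠ 1 := by rintro rfl; omega
  obtain ⟨p, hp, hpk⟩ := Nat.exists_prime_and_dvd hk1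
  refine ⟨p, hp, by rw [hk]; exact Dvd.dvd.mul_left hpk d, ?_⟩
  obtain ⟨t, rfl⟩ := hpk
  refine ⟨t, ?_⟩
  rw [hk, show d * (p * t) = d * t * p by ring, Nat.mul_div_cancel _ hp.pos]

theorem count_degree_two_ell_elements_in_cyclic_subgroup
    (F K : Type) [Field F] [Fintype F]
    [Field K] [Fintype K] [Algebra F K] (q ℓ : ℕ)
    (hq : q = Fintype.card F) (hℓ : 0 < ℓ)
    (hK : Fintype.card K = q ^ (2 * ℓ)) :
    (1 - 3 / (q : ℝ) ^ ((ℓ : ℝ) / 2)) * ((q : ℝ) ^ ℓ + 1)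
      < (Nat.card {ζ : K // ζ ^ (q ^ ℓ + 1) = 1
          ∧ (minpoly F ζ).natDegree = 2 * ℓ} : ℝ) := by
  classical
  have hq2 : 2 ≤ q := by rw [hq]; exact Fintype.one_lt_card
  have hNpos : 0 < q ^ ℓ + 1 := by positivity
  have hA1 : 1 ≤ q ^ ℓ := Nat.one_le_pow _ _ (by omega)
  have hfinrank : Module.finrank F K = 2 * ℓ := by
    have h := Module.card_eq_pow_finrank (K := F) (V := K)
    rw [hK, ← hq] at h
    exact Nat.pow_right_injective hq2 h.symm
  have key : ∀ ζ : K, ζ ^ q ^ (minpoly F ζ).natDegree = ζ := by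
    intro ζ
    have hint : IsIntegral F ζ := .of_finite F ζ
    letI : Fintype F⟮ζ⟯ := Fintype.ofFinite _
    have hcard : Fintype.card F⟮ζ⟯ = q ^ (minpoly F ζ).natDegree := by
      rw [Module.card_eq_pow_finrank (K := F) (V := F⟮ζ⟯),
        IntermediateField.adjoin.finrank hint, hq]
    have h := FiniteField.pow_card (IntermediateField.AdjoinSimple.gen F ζ)
    rw [hcard] at h
    have h2 := congrArg (algebraMap F⟮ζ⟯ K) h
    rwa [map_pow, IntermediateField.AdjoinSimple.algebraMap_gen] at h2
  set S : Finset K := Polynomial.nthRootsFinset (q ^ ℓ + 1) (1 : K) with hS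
  have hcardKu : Nat.card Kˣ = q ^ (2 * ℓ) - 1 := by
    rw [Nat.card_units, Nat.card_eq_fintype_card, hK]
  have hNdvd : q ^ ℓ + 1 ∣ Nat.card Kˣ := by
    rw [hcardKu]
    refine ⟨q ^ ℓ - 1, ?_⟩
    have h2 : q ^ (2 * ℓ) = q ^ ℓ * q ^ ℓ := by rw [two_mul, pow_add]
    obtain ⟨B, hB⟩ : ∃ B, q ^ ℓ = B + 1 := ⟨q ^ ℓ - 1, by omega⟩
    rw [h2, hB]
    simp only [Nat.add_sub_cancel]
    have h3 : (B + 1) * (B + 1) = (B + 1 + 1) * B + 1 := by ring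
    omega
  obtain ⟨g, hg⟩ := IsCyclic.exists_ofOrder_eq_natCard (α := Kˣ)
  have hgord : orderOf g ≠ 0 := by
    rw [hg, hcardKu]
    have h2 : 2 ≤ q ^ (2 * ℓ) := by
      calc 2 ≤ q := hq2
        _ = q ^ 1 := (pow_one q).symm
        _ ≤ q ^ (2 * ℓ) := Nat.pow_le_pow_right (by omega) (by omega)
    omega
  have hNg : q ^ ℓ + 1 ∣ orderOf g := hg ▸ hNdvd
  have hu : orderOf (g ^ (orderOf g / (q ^ ℓ + 1))) = q ^ ℓ + 1 :=
    orderOf_pow_orderOf_div hgord hNg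
  have hprim : IsPrimitiveRoot ((g ^ (orderOf g / (q ^ ℓ + 1)) : Kˣ) : K) (q ^ ℓ + 1) := by
    have h := IsPrimitiveRoot.orderOf ((g ^ (orderOf g / (q ^ ℓ + 1)) : Kˣ) : K)
    rwa [orderOf_units, hu] at h
  have hScard : S.card = q ^ ℓ + 1 := hprim.card_nthRootsFinset
  set good : Finset K := S.filter (fun x => (minpoly F x).natDegree = 2 * ℓ) with hgood
  set bad : Finset K := S.filter (fun x => ¬ (minpoly F x).natDegree = 2 * ℓ) with hbad
  have hsplitc : good.card + bad.card = q ^ ℓ + 1 := by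
    rw [hgood, hbad, Finset.card_filter_add_card_filter_not, hScard]
  set T : Finset ℕ := insert 2 (ℓ.primeFactors.erase 2) with hT
  set R : ℕ → Finset K :=
    fun p => Polynomial.nthRootsFinset (Nat.gcd (q ^ (2 * ℓ / p) - 1) (q ^ ℓ + 1)) (1 : K) with hR
  have hsub : bad ⊆ T.biUnion R := by
    intro ζ hζ
    rw [hbad, Finset.mem_filter] at hζ
    obtain ⟨hζS, hdne⟩ := hζ
    have hζ1 : ζ ^ (q ^ ℓ + 1) = 1 := (Polynomial.mem_nthRootsFinset hNpos (1 : K)).1 hζS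
    have hζ0 : ζ ≠ 0 := by
      rintro rfl
      rw [zero_pow (by omega)] at hζ1
      exact zero_ne_one hζ1
    have hint : IsIntegral F ζ := .of_finite F ζ
    have hdpos : 0 < (minpoly F ζ).natDegree := minpoly.natDegree_pos hint
    have hdvd : (minpoly F ζ).natDegree ∣ 2 * ℓ := by
      have h := minpoly.degree_dvd hint
      rwa [hfinrank] at h
    have hdlt : (minpoly F ζ).natDegree < 2 * ℓ :=
      lt_of_le_of_ne (Nat.le_of_dvd (by omega) hdvd) hdne
    obtain ⟨p, hp, hpn, hpd⟩ := exists_prime_div_aux _ _ hdvd hdlt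
    have hmem : p ∈ T := by
      rw [hT]
      by_cases hp2 : p = 2
      · subst hp2; exact Finset.mem_insert_self _ _
      · have hpl : p ∣ ℓ := by
          rcases (Nat.Prime.dvd_mul hp).1 hpn with h | h
          · exact absurd ((Nat.prime_dvd_prime_iff_eq hp Nat.prime_two).1 h) hp2
          · exact h
        exact Finset.mem_insert_of_mem
          (Finset.mem_erase.2 ⟨hp2, Nat.mem_primeFactors.2 ⟨hp, hpl, by omega⟩⟩)
    refine Finset.mem_biUnion.2 ⟨p, hmem, ?_⟩
    have h1 : ζ ^ (q ^ (minpoly F ζ).natDegree - 1) = 1 := by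
      have h2 := key ζ
      have h3 : q ^ (minpoly F ζ).natDegree
          = (q ^ (minpoly F ζ).natDegree - 1) + 1 := by
        have := Nat.one_le_pow (minpoly F ζ).natDegree q (by omega)
        omega
      rw [h3, pow_succ] at h2
      exact mul_right_cancel₀ hζ0 (by rw [h2, one_mul])
    have h4 : q ^ (minpoly F ζ).natDegree - 1 ∣ q ^ (2 * ℓ / p) - 1 := by
      obtain ⟨c, hc⟩ := hpd
      have h5 := Nat.sub_dvd_pow_sub_pow (q ^ (minpoly F ζ).natDegree) 1 c
      rwa [one_pow, ← pow_mul, ← hc] at h5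
    have h5 : ζ ^ (q ^ (2 * ℓ / p) - 1) = 1 := by
      obtain ⟨c, hc⟩ := h4
      rw [hc, pow_mul, h1, one_pow]
    have h6 : ζ ^ Nat.gcd (q ^ (2 * ℓ / p) - 1) (q ^ ℓ + 1) = 1 := pow_gcd_eq_one.2 ⟨h5, hζ1⟩
    exact (Polynomial.mem_nthRootsFinset (Nat.gcd_pos_of_pos_right _ hNpos) (1 : K)).2 h6
  have hRle : ∀ p, (R p).card ≤ Nat.gcd (q ^ (2 * ℓ / p) - 1) (q ^ ℓ + 1) := by
    intro p
    calc (R p).card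
        ≤ Multiset.card (nthRoots (Nat.gcd (q ^ (2 * ℓ / p) - 1) (q ^ ℓ + 1)) (1 : K)) :=
          Multiset.toFinset_card_le _
      _ ≤ _ := Polynomial.card_nthRoots _ _
  have hg2 : Nat.gcd (q ^ (2 * ℓ / 2) - 1) (q ^ ℓ + 1) ≤ 2 := by
    have h : 2 * ℓ / 2 = ℓ := by omega
    rw [h]
    have hd1 : Nat.gcd (q ^ ℓ - 1) (q ^ ℓ + 1) ∣ q ^ ℓ - 1 := Nat.gcd_dvd_left _ _
    have hd2 : Nat.gcd (q ^ ℓ - 1) (q ^ ℓ + 1) ∣ q ^ ℓ + 1 := Nat.gcd_dvd_right _ _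
    have hdd : Nat.gcd (q ^ ℓ - 1) (q ^ ℓ + 1) ∣ 2 := by
      have h6 := Nat.dvd_sub hd2 hd1
      rwa [show q ^ ℓ + 1 - (q ^ ℓ - 1) = 2 by omega] at h6
    exact Nat.le_of_dvd (by norm_num) hdd
  have hgp : ∀ p ∈ ℓ.primeFactors.erase 2,
      Nat.gcd (q ^ (2 * ℓ / p) - 1) (q ^ ℓ + 1) ≤ q ^ (ℓ / p) + 1 := by
    intro p hpP
    obtain ⟨hp2, hpf⟩ := Finset.mem_erase.1 hpP
    obtain ⟨hp, hpl, -⟩ := Nat.mem_primeFactors.1 hpf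
    have hlm : p * (ℓ / p) = ℓ := Nat.mul_div_cancel' hpl
    rw [Nat.mul_div_assoc 2 hpl]
    have hp3 : 3 ≤ p := by have := hp.two_le; omega
    have hpodd : 2 ∣ p - 1 := by
      rcases Nat.even_or_odd p with h | h
      · exact absurd ((Nat.Prime.even_iff hp).1 h) hp2
      · obtain ⟨s, hs⟩ := h; omega
    obtain ⟨s, hs⟩ := hpodd
    have hdvd2 : q ^ (2 * (ℓ / p)) - 1 ∣ q ^ ((p - 1) * (ℓ / p)) - 1 := by
      have h5 := Nat.sub_dvd_pow_sub_pow (q ^ (2 * (ℓ / p))) 1 s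
      rwa [one_pow, ← pow_mul, show 2 * (ℓ / p) * s = (p - 1) * (ℓ / p) by rw [hs]; ring]
        at h5
    obtain ⟨u, hu⟩ := hdvd2
    have hB : 1 ≤ q ^ ((p - 1) * (ℓ / p)) := Nat.one_le_pow _ _ (by omega)
    have hB' : q ^ ((p - 1) * (ℓ / p)) = (q ^ (2 * (ℓ / p)) - 1) * u + 1 := by
      rw [← hu]; omega
    have hsplit2 : q ^ ℓ = q ^ (ℓ / p) * q ^ ((p - 1) * (ℓ / p)) := by
      rw [← pow_add]
      congr 1
      have h7 : ℓ / p + (p - 1) * (ℓ / p) = (1 + (p - 1)) * (ℓ / p) := by ring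
      rw [h7, show 1 + (p - 1) = p by omega, hlm]
    have hkey : q ^ ℓ + 1 = (q ^ (ℓ / p) + 1)
        + (q ^ (2 * (ℓ / p)) - 1) * (u * q ^ (ℓ / p)) := by
      rw [hsplit2, hB']; ring
    calc Nat.gcd (q ^ (2 * (ℓ / p)) - 1) (q ^ ℓ + 1)
        = Nat.gcd (q ^ (2 * (ℓ / p)) - 1) (q ^ (ℓ / p) + 1) := by
          rw [hkey, Nat.gcd_add_mul_left_right]
      _ ≤ q ^ (ℓ / p) + 1 := Nat.gcd_le_right _ (by positivity)
  -- bound the bad cardinality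
  have h1 : bad.card ≤ ∑ p ∈ T, (R p).card :=
    le_trans (Finset.card_le_card hsub) Finset.card_biUnion_le
  have h2 : ∑ p ∈ T, (R p).card ≤ 2 + ∑ p ∈ ℓ.primeFactors.erase 2, (q ^ (ℓ / p) + 1) := by
    rw [hT, Finset.sum_insert (Finset.notMem_erase _ _)]
    exact Nat.add_le_add (le_trans (hRle 2) hg2)
      (Finset.sum_le_sum fun p hp => le_trans (hRle p) (hgp p hp))
  have hinj : ∀ p ∈ ℓ.primeFactors.erase 2, ∀ p' ∈ ℓ.primeFactors.erase 2,
      ℓ / p = ℓ / p' → p = p' := by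
    intro p hp p' hp' hpp
    obtain ⟨-, hpf⟩ := Finset.mem_erase.1 hp
    obtain ⟨-, hpf'⟩ := Finset.mem_erase.1 hp'
    obtain ⟨_, hpl, -⟩ := Nat.mem_primeFactors.1 hpf
    obtain ⟨_, hpl', -⟩ := Nat.mem_primeFactors.1 hpf'
    rw [← Nat.div_div_self hpl (by omega), hpp, Nat.div_div_self hpl' (by omega)]
  have h3 : ∑ p ∈ ℓ.primeFactors.erase 2, (q ^ (ℓ / p) + 1)
      ≤ ∑ j ∈ Finset.Icc 1 (ℓ / 3), (q ^ j + 1) := by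
    calc ∑ p ∈ ℓ.primeFactors.erase 2, (q ^ (ℓ / p) + 1)
        = ∑ j ∈ (ℓ.primeFactors.erase 2).image (fun p => ℓ / p), (q ^ j + 1) :=
          (Finset.sum_image (f := fun j => q ^ j + 1) (g := fun p => ℓ / p) hinj).symm
      _ ≤ ∑ j ∈ Finset.Icc 1 (ℓ / 3), (q ^ j + 1) := ?_
    apply Finset.sum_le_sum_of_subset
    intro j hj
    obtain ⟨p, hpmem, rfl⟩ := Finset.mem_image.1 hj
    obtain ⟨hp2, hpf⟩ := Finset.mem_erase.1 hpmem
    obtain ⟨hp, hpl, -⟩ := Nat.mem_primeFactors.1 hpf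
    have hp3 : 3 ≤ p := by have := hp.two_le; omega
    have hple : p ≤ ℓ := Nat.le_of_dvd hℓ hpl
    refine Finset.mem_Icc.2 ⟨?_, Nat.div_le_div_left hp3 (by omega)⟩
    rw [Nat.one_le_div_iff hp.pos]
    exact hple
  have h4 : ∑ j ∈ Finset.Icc 1 (ℓ / 3), (q ^ j + 1)
      = (∑ j ∈ Finset.Icc 1 (ℓ / 3), q ^ j) + ℓ / 3 := by
    rw [Finset.sum_add_distrib, Finset.sum_const, Nat.card_Icc]
    simp
  have h5 := geo_sum_le_aux q (ℓ / 3) hq2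
  have h6 : ℓ / 3 ≤ q ^ (ℓ / 3) :=
    le_trans (Nat.lt_two_pow_self).le (Nat.pow_le_pow_left hq2 _)
  have hbadcard : bad.card ≤ 3 * q ^ (ℓ / 3) := by
    have h7 : bad.card ≤ 2 + ((∑ j ∈ Finset.Icc 1 (ℓ / 3), q ^ j) + ℓ / 3) := by
      calc bad.card ≤ ∑ p ∈ T, (R p).card := h1
        _ ≤ 2 + ∑ p ∈ ℓ.primeFactors.erase 2, (q ^ (ℓ / p) + 1) := h2
        _ ≤ 2 + ∑ j ∈ Finset.Icc 1 (ℓ / 3), (q ^ j + 1) := Nat.add_le_add_left h3 2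
        _ = 2 + ((∑ j ∈ Finset.Icc 1 (ℓ / 3), q ^ j) + ℓ / 3) := by rw [h4]
    calc bad.card ≤ 2 + ((∑ j ∈ Finset.Icc 1 (ℓ / 3), q ^ j) + ℓ / 3) := h7
      _ = ((∑ j ∈ Finset.Icc 1 (ℓ / 3), q ^ j) + 2) + ℓ / 3 := by ring
      _ ≤ 2 * q ^ (ℓ / 3) + ℓ / 3 := Nat.add_le_add_right h5 _
      _ ≤ 2 * q ^ (ℓ / 3) + q ^ (ℓ / 3) := Nat.add_le_add_left h6 _
      _ = 3 * q ^ (ℓ / 3) := by ring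
  -- identify the Nat.card with good.card
  have hcount : Nat.card {ζ : K // ζ ^ (q ^ ℓ + 1) = 1
      ∧ (minpoly F ζ).natDegree = 2 * ℓ} = good.card := by
    rw [Nat.card_eq_fintype_card, Fintype.card_subtype]
    congr 1
    ext x
    simp only [Finset.mem_filter, Finset.mem_univ, true_and, hgood, hS,
      Polynomial.mem_nthRootsFinset hNpos]
  rw [hcount]
  -- real estimates
  have hqR : (0:ℝ) < (q:ℝ) := by positivity
  have hQpos : (0:ℝ) < (q:ℝ) ^ ((ℓ:ℝ)/2) := Real.rpow_pos_of_pos hqR _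
  have hq1R : (1:ℝ) ≤ (q:ℝ) := by exact_mod_cast (by omega : 1 ≤ q)
  have hm2 : ((ℓ / 3 : ℕ) : ℝ) ≤ (ℓ : ℝ) / 2 := by
    have hn : 2 * (ℓ / 3) ≤ ℓ := by omega
    have h := (Nat.cast_le (α := ℝ)).2 hn
    push_cast at h
    linarith
  have hqm : ((q:ℝ)) ^ (ℓ / 3 : ℕ) ≤ (q:ℝ) ^ ((ℓ:ℝ)/2) := by
    rw [← Real.rpow_natCast]
    exact Real.rpow_le_rpow_of_exponent_le hq1R hm2
  have hQQ : (q:ℝ) ^ ((ℓ:ℝ)/2) * (q:ℝ) ^ ((ℓ:ℝ)/2) = (q:ℝ) ^ ℓ := by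
    rw [← Real.rpow_add hqR, ← Real.rpow_natCast q ℓ]
    norm_num
  have hgoodR : (good.card : ℝ) = ((q:ℝ) ^ ℓ + 1) - bad.card := by
    have h := congrArg (Nat.cast : ℕ → ℝ) hsplitc
    push_cast at h
    linarith
  have hbadR : (bad.card : ℝ) ≤ 3 * (q:ℝ) ^ (ℓ / 3 : ℕ) := by
    exact_mod_cast hbadcard
  have hstep : (q:ℝ) ^ (ℓ / 3 : ℕ) * ((q:ℝ) ^ ((ℓ:ℝ)/2)) < (q:ℝ) ^ ℓ + 1 := by
    calc (q:ℝ) ^ (ℓ / 3 : ℕ) * ((q:ℝ) ^ ((ℓ:ℝ)/2))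
        ≤ (q:ℝ) ^ ((ℓ:ℝ)/2) * (q:ℝ) ^ ((ℓ:ℝ)/2) :=
          mul_le_mul_of_nonneg_right hqm hQpos.le
      _ = (q:ℝ) ^ ℓ := hQQ
      _ < (q:ℝ) ^ ℓ + 1 := by linarith
  have h3Q : 3 * ((q:ℝ) ^ (ℓ / 3 : ℕ)) < 3 * (((q:ℝ) ^ ℓ + 1) / (q:ℝ) ^ ((ℓ:ℝ)/2)) := by
    have h := (lt_div_iff₀ hQpos).2 hstep
    linarith
  have hexpand : (1 - 3 / (q:ℝ) ^ ((ℓ:ℝ)/2)) * ((q:ℝ) ^ ℓ + 1)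
      = ((q:ℝ) ^ ℓ + 1) - 3 * (((q:ℝ) ^ ℓ + 1) / (q:ℝ) ^ ((ℓ:ℝ)/2)) := by ring
  rw [hexpand]
  linarith
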